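/- Let M be a finite-dimensional complex vector space with non-degenerate symmetric bilinear form q, and θ : M → M skew-symmetric with respect to q, not nilpotent and of rank 2. Then the restriction of q to ker(θ) is non-degenerate. -/

import Mathlib

open Module Polynomial

lemma exists_ne_zero_eigenvalue {M : Type*} [AddCommGroup M] [Module ℂ M] [FiniteDimensional ℂ M]
    (θ : Module.End ℂ M) (hnil : ¬ IsNilpotent θ) :
    ∃ (l : ℂ) (e : M), l ≠ 0 ∧ e ≠ 0 ∧ θ e = l • e := by
  by_contra h
  push_neg at h
  apply hnil
  set p := minpoly ℂ θ with hp
  have hint : IsIntegral ℂ θ := Algebra.IsIntegral.isIntegral θ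
  have hmon : p.Monic := minpoly.monic hint
  have hroots : ∀ r ∈ p.roots, r = 0 := by
    intro r hr
    by_contra hr0
    have hev : θ.HasEigenvalue r := by
      rw [Module.End.hasEigenvalue_iff_isRoot]
      exact isRoot_of_mem_roots hr
    obtain ⟨e, he⟩ := hev.exists_hasEigenvector
    exact h r e hr0 he.2 he.apply_eq_smul
  have hsplits : p.Splits := IsAlgClosed.splits p
  have hprod : p = (p.roots.map fun a => X - C a).prod :=
    hsplits.eq_prod_roots_of_monic hmon
  have hrepl : p.roots.map (fun a => X - C a) = Multiset.replicate (Multiset.card p.roots) X := by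
    rw [Multiset.eq_replicate]
    refine ⟨by simp, ?_⟩
    intro b hb
    obtain ⟨a, ha, rfl⟩ := Multiset.mem_map.mp hb
    rw [hroots a ha]; simp
  have hXpow : p = X ^ Multiset.card p.roots := by
    conv_lhs => rw [hprod]
    rw [hrepl, Multiset.prod_replicate]
  refine ⟨Multiset.card p.roots, ?_⟩
  have h0 := minpoly.aeval ℂ θ
  rw [← hp, hXpow, map_pow, aeval_X] at h0
  exact h0

/-- Let `M` be a finite-dimensional complex vector space with a
non-degenerate symmetric bilinear form `q`, and `θ : M → M` skew-symmetric with respect to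
`q`, not nilpotent and of rank 2. Then the restriction of `q` to `ker θ` is non-degenerate. -/
theorem restriction_to_kernel_nondegenerate
    {M : Type*} [AddCommGroup M] [Module ℂ M] [FiniteDimensional ℂ M]
    (q : M →ₗ[ℂ] M →ₗ[ℂ] ℂ)
    (hsymm : ∀ v w : M, q v w = q w v)
    (hnd : ∀ v : M, (∀ w : M, q v w = 0) → v = 0)
    (θ : M →ₗ[ℂ] M)
    (hskew : ∀ v₁ v₂ : M, q (θ v₁) v₂ = - q v₁ (θ v₂))
    (hnil : ¬ IsNilpotent θ)
    (hrk : Module.finrank ℂ (LinearMap.range θ) = 2) :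
    ∀ v ∈ LinearMap.ker θ, (∀ w ∈ LinearMap.ker θ, q v w = 0) → v = 0 := by
  intro v hv hvk
  -- nonzero eigenvalue l with eigenvector e
  obtain ⟨l, e, hl, he, hle⟩ := exists_ne_zero_eigenvalue θ hnil
  -- eigenvector f for -l
  have hf : ∃ f : M, f ≠ 0 ∧ θ f = (-l) • f := by
    by_contra hcon
    push_neg at hcon
    set φ : M →ₗ[ℂ] M := θ + l • LinearMap.id with hphi
    have hker : LinearMap.ker φ = ⊥ := by
      rw [LinearMap.ker_eq_bot']
      intro m hm
      by_contra hm0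
      apply hcon m hm0
      have : θ m + l • m = 0 := by
        have h' := hm
        rw [hphi] at h'
        simpa using h'
      rw [neg_smul, eq_neg_iff_add_eq_zero]
      exact this
    have hsurj : Function.Surjective φ :=
      (LinearMap.injective_iff_surjective).mp (LinearMap.ker_eq_bot.mp hker)
    apply he
    apply hnd
    intro w
    obtain ⟨u, rfl⟩ := hsurj w
    have h1 : q e (θ u) = - q (θ e) u := by rw [hskew e u]; ring
    have h2 : q (θ e) u = l * q e u := by rw [hle, map_smul, LinearMap.smul_apply, smul_eq_mul]
    rw [hphi]
    simp only [LinearMap.add_apply, LinearMap.smul_apply, LinearMap.id_apply, map_add,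
      map_smul, smul_eq_mul, h1, h2]
    ring
  obtain ⟨f, hf0, hlf⟩ := hf
  -- e and f are in range θ
  have heW : e ∈ LinearMap.range θ := ⟨l⁻¹ • e, by rw [map_smul, hle, smul_smul, inv_mul_cancel₀ hl, one_smul]⟩
  have hfW : f ∈ LinearMap.range θ := ⟨(-l)⁻¹ • f, by
    rw [map_smul, hlf, smul_smul, inv_mul_cancel₀ (neg_ne_zero.mpr hl), one_smul]⟩
  -- e, f linearly independent
  have hli : LinearIndependent ℂ ![e, f] := by
    rw [LinearIndependent.pair_iff]
    intro a b hab
    have h1 : θ (a • e + b • f) = 0 := by rw [hab, map_zero]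
    rw [map_add, map_smul, map_smul, hle, hlf, smul_smul, smul_smul] at h1
    -- a*l • e + b*(-l) • f = 0  and  a • e + b • f = 0
    have h2 : (a * l) • e + (b * l) • f = 0 := by
      have := congrArg (fun x => l • x) hab
      simpa [smul_add, smul_smul, mul_comm] using this
    have h3 : (b * l - b * (-l)) • f = 0 := by
      have := sub_eq_zero.mpr (h2.trans h1.symm)
      rw [add_sub_add_left_eq_sub, ← sub_smul] at this
      exact this
    have hb : b = 0 := by
      rcases smul_eq_zero.mp h3 with h | h
      · have : b * (2 * l) = 0 := by rw [← h]; ring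
        rcases mul_eq_zero.mp this with h' | h'
        · exact h'
        · exact absurd h' (by simp [hl])
      · exact absurd h hf0
    have ha : a = 0 := by
      rw [hb, zero_smul, add_zero] at hab
      rcases smul_eq_zero.mp hab with h | h
      · exact h
      · exact absurd h he
    exact ⟨ha, hb⟩
  -- span {e, f} = range θ
  have hspan : Submodule.span ℂ {e, f} = LinearMap.range θ := by
    apply Submodule.eq_of_le_of_finrank_le
    · rw [Submodule.span_le]
      rintro x (rfl | rfl)
      exacts [heW, hfW]
    · rw [hrk]
      have := finrank_span_eq_card hli
      rw [show ({e, f} : Set M) = Set.range ![e, f] by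
        simp [Matrix.range_cons, Matrix.range_empty, Set.union_singleton, Set.pair_comm]]
      rw [this]
      simp
  -- ker θ ⊓ range θ = ⊥
  have hinf : LinearMap.ker θ ⊓ LinearMap.range θ = ⊥ := by
    rw [eq_bot_iff]
    intro x hx
    obtain ⟨hxk, hxw⟩ := Submodule.mem_inf.mp hx
    rw [← hspan, Submodule.mem_span_pair] at hxw
    obtain ⟨a, b, rfl⟩ := hxw
    have h1 : (a * l) • e + (b * (-l)) • f = 0 := by
      have : θ (a • e + b • f) = 0 := hxk
      rw [map_add, map_smul, map_smul, hle, hlf, smul_smul, smul_smul] at this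
      exact this
    obtain ⟨ha, hb⟩ := (LinearIndependent.pair_iff.mp hli) _ _ h1
    have ha' : a = 0 := by rcases mul_eq_zero.mp ha with h | h; exact h; exact absurd h hl
    have hb' : b = 0 := by
      rcases mul_eq_zero.mp hb with h | h; exact h
      exact absurd h (neg_ne_zero.mpr hl)
    simp [ha', hb']
  -- ker ⊔ range = ⊤
  have hsup : LinearMap.ker θ ⊔ LinearMap.range θ = ⊤ := by
    apply Submodule.eq_top_of_finrank_eq
    have := Submodule.finrank_sup_add_finrank_inf_eq (LinearMap.ker θ) (LinearMap.range θ)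
    rw [hinf] at this
    simp only [finrank_bot, add_zero] at this
    rw [this, add_comm]
    exact LinearMap.finrank_range_add_finrank_ker θ
  -- conclude
  apply hnd
  intro w
  have hw : w ∈ LinearMap.ker θ ⊔ LinearMap.range θ := hsup ▸ Submodule.mem_top
  obtain ⟨k, hk, r, hr, rfl⟩ := Submodule.mem_sup.mp hw
  obtain ⟨u, rfl⟩ := hr
  have h1 : q v (θ u) = 0 := by
    have := hskew v u
    rw [LinearMap.mem_ker.mp hv] at this
    simp only [map_zero, LinearMap.zero_apply] at this
    exact neg_eq_zero.mp this.symm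
  rw [map_add, h1, add_zero]
  exact hvk k hk
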